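/- Let W = {w₁,…,w_L} be finite, β ∈ (0,1), g : W → ℝ, P̂ = (p̂_ℓ) ∈ Δ_L, θ ≥ 0, and D_{ℓ1} = { μ ∈ Δ_L : (1/2)‖μ − P̂‖₁ ≤ θ }. Then sup_{μ ∈ D_{ℓ1}} CVaR_β^μ[g(w)] equals the infimum over (λ ≥ 0, η ∈ ℝ, ν ∈ ℝ, γ₁, γ₂ ∈ ℝ^L_{≥0}) of 2λθ + η + ν + Σ_ℓ (γ₁ℓ − γ₂ℓ) p̂_ℓ subject to β(γ₁ℓ − γ₂ℓ + ν) ≥ (g(w_ℓ) − η)_+ and γ₁ℓ + γ₂ℓ = λ for all ℓ ∈ {1,…,L}. -/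

import Mathlib

open Finset

lemma cvar_inner_lb {L : ℕ} (β : ℝ) (hβ0 : 0 < β) (hβ1 : β < 1) (g μ : Fin L → ℝ)
    (hμ0 : ∀ ℓ, 0 ≤ μ ℓ) (hμ1 : ∑ ℓ, μ ℓ = 1) (η : ℝ) :
    ∑ ℓ, μ ℓ * g ℓ ≤ η + β⁻¹ * ∑ ℓ, μ ℓ * max (g ℓ - η) 0 := by
  have hT0 : 0 ≤ ∑ ℓ, μ ℓ * max (g ℓ - η) 0 :=
    Finset.sum_nonneg fun ℓ _ => mul_nonneg (hμ0 ℓ) (le_max_right _ _)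
  have hT1 : ∑ ℓ, μ ℓ * g ℓ - η ≤ ∑ ℓ, μ ℓ * max (g ℓ - η) 0 := by
    have h1 : ∑ ℓ, μ ℓ * (g ℓ - η) ≤ ∑ ℓ, μ ℓ * max (g ℓ - η) 0 :=
      Finset.sum_le_sum fun ℓ _ => mul_le_mul_of_nonneg_left (le_max_left _ _) (hμ0 ℓ)
    have h2 : ∑ ℓ, μ ℓ * (g ℓ - η) = ∑ ℓ, μ ℓ * g ℓ - η := by
      simp [mul_sub, Finset.sum_sub_distrib, ← Finset.sum_mul, hμ1]
    linarith
  have hi0 : 0 < β⁻¹ := inv_pos.2 hβ0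
  have hi1 : 1 ≤ β⁻¹ := by
    rw [le_inv_comm₀ one_pos hβ0]; simpa using hβ1.le
  nlinarith [mul_nonneg (sub_nonneg.2 hi1) hT0]

theorem stmt_8 (L : ℕ) (hL : 0 < L)
    (β : ℝ) (hβ : β ∈ Set.Ioo (0 : ℝ) 1)
    (g : Fin L → ℝ)
    (phat : Fin L → ℝ) (hphat_nonneg : ∀ ℓ, 0 ≤ phat ℓ) (hphat_sum : ∑ ℓ, phat ℓ = 1)
    (θ : ℝ) (hθ : 0 ≤ θ) :
    sSup {v : ℝ | ∃ μ : Fin L → ℝ, (∀ ℓ, 0 ≤ μ ℓ) ∧ (∑ ℓ, μ ℓ = 1) ∧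
        (1 / 2) * (∑ ℓ, |μ ℓ - phat ℓ|) ≤ θ ∧
        v = sInf {y : ℝ | ∃ η : ℝ, y = η + β⁻¹ * ∑ ℓ, μ ℓ * max (g ℓ - η) 0}}
      = sInf {v : ℝ | ∃ (lam η ν : ℝ) (γ₁ γ₂ : Fin L → ℝ),
          0 ≤ lam ∧ (∀ ℓ, 0 ≤ γ₁ ℓ) ∧ (∀ ℓ, 0 ≤ γ₂ ℓ) ∧
          (∀ ℓ, max (g ℓ - η) 0 ≤ β * (γ₁ ℓ - γ₂ ℓ + ν)) ∧
          (∀ ℓ, γ₁ ℓ + γ₂ ℓ = lam) ∧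
          v = 2 * lam * θ + η + ν + ∑ ℓ, (γ₁ ℓ - γ₂ ℓ) * phat ℓ} := by
  classical
  obtain ⟨hβ0, hβ1⟩ := hβ
  have hβne : β ≠ 0 := ne_of_gt hβ0
  set S := {v : ℝ | ∃ μ : Fin L → ℝ, (∀ ℓ, 0 ≤ μ ℓ) ∧ (∑ ℓ, μ ℓ = 1) ∧
        (1 / 2) * (∑ ℓ, |μ ℓ - phat ℓ|) ≤ θ ∧
        v = sInf {y : ℝ | ∃ η : ℝ, y = η + β⁻¹ * ∑ ℓ, μ ℓ * max (g ℓ - η) 0}} with hSdef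
  set T := {v : ℝ | ∃ (lam η ν : ℝ) (γ₁ γ₂ : Fin L → ℝ),
          0 ≤ lam ∧ (∀ ℓ, 0 ≤ γ₁ ℓ) ∧ (∀ ℓ, 0 ≤ γ₂ ℓ) ∧
          (∀ ℓ, max (g ℓ - η) 0 ≤ β * (γ₁ ℓ - γ₂ ℓ + ν)) ∧
          (∀ ℓ, γ₁ ℓ + γ₂ ℓ = lam) ∧
          v = 2 * lam * θ + η + ν + ∑ ℓ, (γ₁ ℓ - γ₂ ℓ) * phat ℓ} with hTdef
  have hfin : Nonempty (Fin L) := ⟨⟨0, hL⟩⟩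
  -- trivial dual point
  have ht0mem : (univ.sup' univ_nonempty g : ℝ) ∈ T := by
    refine ⟨0, univ.sup' univ_nonempty g, 0, 0, 0, le_rfl, fun _ => le_rfl, fun _ => le_rfl,
      fun ℓ => ?_, fun _ => by simp, by simp⟩
    simp only [Pi.zero_apply, sub_zero, add_zero, mul_zero]
    exact max_le (sub_nonpos.2 (le_sup' g (mem_univ ℓ))) le_rfl
  have hTne : T.Nonempty := ⟨_, ht0mem⟩
  -- weak duality
  have weak : ∀ v ∈ S, ∀ w ∈ T, v ≤ w := by
    rintro v ⟨μ, hμ0, hμ1, hμtv, rfl⟩ w ⟨lam, η, ν, γ₁, γ₂, hlam, hγ₁, hγ₂, hcon, hgs, rfl⟩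
    have hbdd : BddBelow {y : ℝ | ∃ η : ℝ, y = η + β⁻¹ * ∑ ℓ, μ ℓ * max (g ℓ - η) 0} := by
      refine ⟨∑ ℓ, μ ℓ * g ℓ, ?_⟩
      rintro y ⟨η', rfl⟩
      exact cvar_inner_lb β hβ0 hβ1 g μ hμ0 hμ1 η'
    refine le_trans (csInf_le hbdd ⟨η, rfl⟩) ?_
    -- η + β⁻¹ * ∑ μ max ≤ 2 lam θ + η + ν + ∑ (γ₁-γ₂) phat
    have hδ : ∀ ℓ, |γ₁ ℓ - γ₂ ℓ| ≤ lam := fun ℓ => abs_le.2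
      ⟨by have := hγ₁ ℓ; have := hγ₂ ℓ; have := hgs ℓ; linarith,
       by have := hγ₁ ℓ; have := hγ₂ ℓ; have := hgs ℓ; linarith⟩
    have h1 : ∑ ℓ, μ ℓ * max (g ℓ - η) 0 ≤ β * (∑ ℓ, μ ℓ * (γ₁ ℓ - γ₂ ℓ) + ν) := by
      have := Finset.sum_le_sum (fun ℓ (_ : ℓ ∈ univ) =>
        mul_le_mul_of_nonneg_left (hcon ℓ) (hμ0 ℓ))
      calc ∑ ℓ, μ ℓ * max (g ℓ - η) 0 ≤ ∑ ℓ, μ ℓ * (β * (γ₁ ℓ - γ₂ ℓ + ν)) := this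
        _ = ∑ ℓ, (β * (μ ℓ * (γ₁ ℓ - γ₂ ℓ)) + (β * ν) * μ ℓ) :=
            Finset.sum_congr rfl (fun ℓ _ => by ring)
        _ = β * (∑ ℓ, μ ℓ * (γ₁ ℓ - γ₂ ℓ)) + (β * ν) * ∑ ℓ, μ ℓ := by
            rw [Finset.sum_add_distrib, ← Finset.mul_sum, ← Finset.mul_sum]
        _ = β * (∑ ℓ, μ ℓ * (γ₁ ℓ - γ₂ ℓ) + ν) := by rw [hμ1]; ring
    have h2 : ∑ ℓ, μ ℓ * (γ₁ ℓ - γ₂ ℓ) ≤ (∑ ℓ, (γ₁ ℓ - γ₂ ℓ) * phat ℓ) + lam * (2 * θ) := by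
      have hpt : ∀ ℓ, μ ℓ * (γ₁ ℓ - γ₂ ℓ) - (γ₁ ℓ - γ₂ ℓ) * phat ℓ ≤ lam * |μ ℓ - phat ℓ| := by
        intro ℓ
        calc μ ℓ * (γ₁ ℓ - γ₂ ℓ) - (γ₁ ℓ - γ₂ ℓ) * phat ℓ
            = (μ ℓ - phat ℓ) * (γ₁ ℓ - γ₂ ℓ) := by ring
          _ ≤ |(μ ℓ - phat ℓ) * (γ₁ ℓ - γ₂ ℓ)| := le_abs_self _
          _ = |μ ℓ - phat ℓ| * |γ₁ ℓ - γ₂ ℓ| := abs_mul _ _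
          _ ≤ |μ ℓ - phat ℓ| * lam := mul_le_mul_of_nonneg_left (hδ ℓ) (abs_nonneg _)
          _ = lam * |μ ℓ - phat ℓ| := mul_comm _ _
      have hsum := Finset.sum_le_sum (fun ℓ (_ : ℓ ∈ univ) => hpt ℓ)
      rw [Finset.sum_sub_distrib, ← Finset.mul_sum] at hsum
      have h3 : lam * ∑ ℓ, |μ ℓ - phat ℓ| ≤ lam * (2 * θ) :=
        mul_le_mul_of_nonneg_left (by linarith) hlam
      linarith
    have h4 : β⁻¹ * ∑ ℓ, μ ℓ * max (g ℓ - η) 0 ≤ β⁻¹ * (β * (∑ ℓ, μ ℓ * (γ₁ ℓ - γ₂ ℓ) + ν)) :=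
      mul_le_mul_of_nonneg_left h1 (inv_pos.2 hβ0).le
    rw [inv_mul_cancel_left₀ hβne] at h4
    linarith
  -- S nonempty and bounded above, T bounded below
  have hSne : S.Nonempty := ⟨_, phat, hphat_nonneg, hphat_sum, by simp [hθ], rfl⟩
  have hSbdd : BddAbove S := ⟨_, fun v hv => weak v hv _ ht0mem⟩
  have hTbdd : BddBelow T := by
    obtain ⟨s₀, hs₀⟩ := hSne
    exact ⟨s₀, fun w hw => weak s₀ hs₀ w hw⟩
  refine le_antisymm (csSup_le hSne fun v hv => le_csInf hTne fun w hw => weak v hv w hw) ?_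
  -- hard direction: sInf T ≤ sSup S
  set τ := Tuple.sort g with hτ
  have hmono : Monotone (g ∘ τ) := Tuple.monotone_sort g
  set q : ℕ → ℝ := fun i => if h : i < L then phat (τ ⟨i, h⟩) else 0 with hq
  set F : ℕ → ℝ := fun n => ∑ i ∈ Finset.range n, q i with hF
  have hq0 : ∀ i, 0 ≤ q i := by
    intro i; rw [hq]; dsimp only; split_ifs; exacts [hphat_nonneg _, le_rfl]
  have hqval : ∀ i : Fin L, q i.val = phat (τ i) := by
    intro i; rw [hq]; dsimp only; rw [dif_pos i.isLt]
  have hFmono : Monotone F := by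
    intro m n hmn
    rw [hF]; dsimp only
    exact Finset.sum_le_sum_of_subset_of_nonneg (Finset.range_subset_range.2 hmn) (fun i _ _ => hq0 i)
  have hFnn : ∀ n, 0 ≤ F n := fun n => Finset.sum_nonneg fun i _ => hq0 i
  have hFsucc : ∀ n, F (n+1) = F n + q n := fun n => Finset.sum_range_succ q n
  have hFL : F L = 1 := by
    rw [hF]; dsimp only
    rw [← Fin.sum_univ_eq_sum_range q L]
    rw [Finset.sum_congr rfl (fun i (_ : i ∈ univ) => hqval i)]
    exact (Equiv.sum_comp τ phat).trans hphat_sum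
  have hF0 : F 0 = 0 := by rw [hF]; simp
  have hex : ∃ k, k = L - 1 ∨ θ ≤ F (k + 1) := ⟨L - 1, Or.inl rfl⟩
  set k := Nat.find hex with hkdef
  have hkspec : k = L - 1 ∨ θ ≤ F (k + 1) := Nat.find_spec hex
  have hkle : k ≤ L - 1 := Nat.find_le (Or.inl rfl)
  have hkL : k < L := lt_of_le_of_lt hkle (Nat.sub_lt hL one_pos)
  have hklt : ∀ j, j < k → F (j + 1) < θ ∧ j ≠ L - 1 := by
    intro j hj
    have h := Nat.find_min hex hj
    push_neg at h
    exact ⟨h.2, h.1⟩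
  set t := min θ (F (L - 1)) with htdef
  have ht0 : 0 ≤ t := le_min hθ (hFnn _)
  have htθ : t ≤ θ := min_le_left _ _
  have hFkt : F k ≤ t := by
    refine le_min ?_ (hFmono hkle)
    rcases Nat.eq_zero_or_pos k with h0 | h0
    · rw [h0, hF0]; exact hθ
    · have h1 := (hklt (k - 1) (Nat.sub_lt h0 one_pos)).1
      rw [show k - 1 + 1 = k by omega] at h1
      exact h1.le
  have htFk1 : t ≤ F (k + 1) := by
    rcases hkspec with h | h
    · exact le_trans (min_le_right _ _) (hFmono (by omega))
    · exact le_trans (min_le_left _ _) h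
  have hkeq : k = L - 1 → t = F k := by
    intro h
    rcases Nat.lt_or_ge 1 L with hL2 | hL1
    · have h2 : L - 2 < k := by omega
      have := (hklt (L - 2) h2).1
      rw [show L - 2 + 1 = L - 1 by omega] at this
      rw [htdef, h, min_eq_right this.le]
    · have hL1' : L = 1 := by omega
      have hz : F (L - 1) = 0 := by rw [hL1']; exact hF0
      rw [htdef, h, hz, min_eq_right hθ]
  set r : ℕ → ℝ := fun i => if i < k then q i else if i = k then t - F k else 0 with hr
  have hr0 : ∀ i, 0 ≤ r i := by
    intro i; rw [hr]; dsimp only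
    split_ifs with h1 h2
    · exact hq0 i
    · linarith
    · exact le_rfl
  have hrq : ∀ i, r i ≤ q i := by
    intro i; rw [hr]; dsimp only
    split_ifs with h1 h2
    · exact le_rfl
    · rw [h2]; have h3 := hFsucc k; linarith
    · exact hq0 i
  have hrtop : r (L - 1) = 0 := by
    rcases eq_or_ne (L - 1) k with h | h
    · rw [hr]; dsimp only
      rw [if_neg (not_lt.2 hkle), if_pos h]
      have := hkeq h.symm; linarith
    · rw [hr]; dsimp only
      rw [if_neg (not_lt.2 hkle), if_neg h]
  have hrsum : ∑ i ∈ Finset.range L, r i = t := by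
    have h1 : ∀ i ∈ Finset.range L, r i =
        (if i < k then q i else 0) + (if i = k then t - F k else 0) := by
      intro i _
      rw [hr]; dsimp only
      rcases lt_trichotomy i k with h | h | h
      · rw [if_pos h, if_pos h, if_neg (ne_of_lt h), add_zero]
      · rw [if_neg (not_lt.2 h.ge), if_neg (not_lt.2 h.ge), if_pos h, zero_add]
      · rw [if_neg (not_lt.2 h.le), if_neg (not_lt.2 h.le), if_neg (ne_of_gt h), add_zero]
    rw [Finset.sum_congr rfl h1, Finset.sum_add_distrib]
    have h2 : ∑ i ∈ Finset.range L, (if i < k then q i else 0) = F k := by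
      rw [← Finset.sum_subset (Finset.range_subset_range.2 hkL.le)
        (fun x _ hx => if_neg (by simpa using hx))]
      rw [hF]; dsimp only
      exact Finset.sum_congr rfl (fun i hi => if_pos (Finset.mem_range.1 hi))
    have h3 : ∑ i ∈ Finset.range L, (if i = k then t - F k else 0) = t - F k := by
      rw [Finset.sum_ite_eq' (Finset.range L) k (fun _ => t - F k)]
      rw [if_pos (Finset.mem_range.2 hkL)]
    rw [h2, h3]; ring
  set ms : ℕ → ℝ := fun i => q i - r i + (if i = L - 1 then t else 0) with hms
  set μd : Fin L → ℝ := fun ℓ => ms (τ.symm ℓ).val with hμd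
  have hms0 : ∀ i, 0 ≤ ms i := by
    intro i; rw [hms]; dsimp only
    have h1 := hrq i
    split_ifs <;> linarith
  have hμd0 : ∀ ℓ, 0 ≤ μd ℓ := fun ℓ => hms0 _
  have hreidx : ∀ f : Fin L → ℝ, (∀ i : Fin L, f (τ i) = (fun j => f (τ j)) i) →
      True := fun _ _ => trivial
  have hsum_ms : ∀ G : ℕ → ℝ, ∑ i ∈ Finset.range L, G i = ∑ i : Fin L, G i.val :=
    fun G => (Fin.sum_univ_eq_sum_range G L).symm
  have hμdsum : ∑ ℓ, μd ℓ = 1 := by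
    have h1 : ∑ ℓ, μd ℓ = ∑ i ∈ Finset.range L, ms i := by
      rw [← Equiv.sum_comp τ μd, hsum_ms ms]
      refine Finset.sum_congr rfl (fun i _ => ?_)
      rw [hμd]; dsimp only
      rw [Equiv.symm_apply_apply]
    have h2 : ∑ i ∈ Finset.range L, (if i = L - 1 then t else 0) = t := by
      rw [Finset.sum_ite_eq' (Finset.range L) (L - 1) (fun _ => t)]
      rw [if_pos (Finset.mem_range.2 (Nat.sub_lt hL one_pos))]
    have h3 : ∑ i ∈ Finset.range L, q i = 1 := by rw [hF] at hFL; exact hFL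
    rw [h1, hms]; dsimp only
    rw [Finset.sum_add_distrib, Finset.sum_sub_distrib, h2, h3, hrsum]
    ring
  have hμdtv : (1 / 2 : ℝ) * (∑ ℓ, |μd ℓ - phat ℓ|) ≤ θ := by
    have h1 : ∑ ℓ, |μd ℓ - phat ℓ| = ∑ i ∈ Finset.range L, |ms i - q i| := by
      rw [← Equiv.sum_comp τ (fun ℓ => |μd ℓ - phat ℓ|), hsum_ms (fun i => |ms i - q i|)]
      refine Finset.sum_congr rfl (fun i _ => ?_)
      rw [hμd]; dsimp only
      rw [Equiv.symm_apply_apply, hqval i]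
    have h2 : ∀ i ∈ Finset.range L, |ms i - q i| =
        r i + (if i = L - 1 then t - r i else 0) := by
      intro i _
      rw [hms]; dsimp only
      rcases eq_or_ne i (L - 1) with h | h
      · rw [if_pos h, if_pos h, h, hrtop]
        simpa using abs_of_nonneg ht0
      · rw [if_neg h, if_neg h, add_zero, add_zero]
        rw [show q i - r i - q i = -(r i) by ring, abs_neg, abs_of_nonneg (hr0 i)]
    have h3 : ∑ i ∈ Finset.range L, (if i = L - 1 then t - r i else 0) = t := by
      rw [Finset.sum_ite_eq' (Finset.range L) (L - 1) (fun i => t - r i)]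
      rw [if_pos (Finset.mem_range.2 (Nat.sub_lt hL one_pos)), hrtop, sub_zero]
    rw [h1, Finset.sum_congr rfl h2, Finset.sum_add_distrib, hrsum, h3]
    linarith
  have hμdmem : sInf {y : ℝ | ∃ η : ℝ, y = η + β⁻¹ * ∑ ℓ, μd ℓ * max (g ℓ - η) 0} ∈ S :=
    ⟨μd, hμd0, hμdsum, hμdtv, rfl⟩
  refine le_trans ?_ (le_csSup hSbdd hμdmem)
  refine le_csInf ⟨_, 0, rfl⟩ ?_
  rintro y ⟨η, rfl⟩
  -- per-η dual construction
  set c : ℕ → ℝ := fun i => if h : i < L then max (g (τ ⟨i, h⟩) - η) 0 else 0 with hc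
  have hcval : ∀ i : Fin L, c i.val = max (g (τ i) - η) 0 := by
    intro i; rw [hc]; dsimp only; rw [dif_pos i.isLt]
  have hcl : ∀ ℓ : Fin L, max (g ℓ - η) 0 = c (τ.symm ℓ).val := by
    intro ℓ; rw [hcval (τ.symm ℓ), Equiv.apply_symm_apply]
  have hcmono : ∀ i j : ℕ, i ≤ j → j < L → c i ≤ c j := by
    intro i j hij hj
    have hi : i < L := lt_of_le_of_lt hij hj
    rw [hc]; dsimp only; rw [dif_pos hi, dif_pos hj]
    have hg : g (τ ⟨i, hi⟩) ≤ g (τ ⟨j, hj⟩) := hmono (Fin.mk_le_mk.2 hij)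
    exact max_le_max (by linarith) le_rfl
  have hL1 : L - 1 < L := Nat.sub_lt hL one_pos
  set a := c k with ha
  set M := c (L - 1) with hM
  have haM : a ≤ M := hcmono k (L - 1) hkle hL1
  set m := (M - a) / 2 with hm
  have hm0 : 0 ≤ m := by rw [hm]; linarith
  have hm2 : 2 * m = M - a := by rw [hm]; ring
  have hcleM : ∀ ℓ : Fin L, max (g ℓ - η) 0 ≤ M := by
    intro ℓ
    rw [hcl ℓ]
    exact hcmono _ (L - 1) (by have := (τ.symm ℓ).isLt; omega) hL1
  set δ : Fin L → ℝ := fun ℓ => β⁻¹ * (max (max (g ℓ - η) 0) a - (a + m)) with hδ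
  set lam := β⁻¹ * m with hlam
  set ν' := β⁻¹ * (a + m) with hν'
  set γ₁ : Fin L → ℝ := fun ℓ => (lam + δ ℓ) / 2 with hγ₁def
  set γ₂ : Fin L → ℝ := fun ℓ => (lam - δ ℓ) / 2 with hγ₂def
  have hβi0 : (0:ℝ) ≤ β⁻¹ := (inv_pos.2 hβ0).le
  have hnum_ub : ∀ ℓ, max (max (g ℓ - η) 0) a - (a + m) ≤ m := fun ℓ => by
    have h1 := max_le (hcleM ℓ) haM; linarith
  have hnum_lb : ∀ ℓ, -m ≤ max (max (g ℓ - η) 0) a - (a + m) := fun ℓ => by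
    have h1 : a ≤ max (max (g ℓ - η) 0) a := le_max_right _ _; linarith
  have hδub : ∀ ℓ, δ ℓ ≤ lam := fun ℓ => by
    rw [hδ, hlam]; exact mul_le_mul_of_nonneg_left (hnum_ub ℓ) hβi0
  have hδlb : ∀ ℓ, -lam ≤ δ ℓ := fun ℓ => by
    rw [hδ, hlam]; dsimp only
    have h1 := mul_le_mul_of_nonneg_left (hnum_lb ℓ) hβi0
    rw [mul_neg] at h1; linarith
  have hγ₁0 : ∀ ℓ, 0 ≤ γ₁ ℓ := fun ℓ => by
    rw [hγ₁def]; dsimp only; have := hδlb ℓ; linarith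
  have hγ₂0 : ∀ ℓ, 0 ≤ γ₂ ℓ := fun ℓ => by
    rw [hγ₂def]; dsimp only; have := hδub ℓ; linarith
  have hγd : ∀ ℓ, γ₁ ℓ - γ₂ ℓ = δ ℓ := fun ℓ => by
    rw [hγ₁def, hγ₂def]; dsimp only; ring
  have hγs : ∀ ℓ, γ₁ ℓ + γ₂ ℓ = lam := fun ℓ => by
    rw [hγ₁def, hγ₂def]; dsimp only; ring
  have hβδν : ∀ ℓ, β * (δ ℓ + ν') = max (max (g ℓ - η) 0) a := by
    intro ℓ; rw [hδ, hν']; dsimp only; field_simp; ring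
  have hcon : ∀ ℓ, max (g ℓ - η) 0 ≤ β * (γ₁ ℓ - γ₂ ℓ + ν') := by
    intro ℓ; rw [hγd ℓ, hβδν ℓ]; exact le_max_left _ _
  have hlam0 : 0 ≤ lam := by rw [hlam]; exact mul_nonneg hβi0 hm0
  have hmemT : 2 * lam * θ + η + ν' + ∑ ℓ, (γ₁ ℓ - γ₂ ℓ) * phat ℓ ∈ T :=
    ⟨lam, η, ν', γ₁, γ₂, hlam0, hγ₁0, hγ₂0, hcon, hγs, rfl⟩
  refine le_trans (csInf_le hTbdd hmemT) (le_of_eq ?_)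
  -- value identity
  have hsum1 : ∑ ℓ, (γ₁ ℓ - γ₂ ℓ) * phat ℓ
      = ∑ i ∈ Finset.range L, β⁻¹ * ((max (c i) a - (a + m)) * q i) := by
    rw [Finset.sum_congr rfl (fun ℓ (_ : ℓ ∈ univ) => by rw [hγd ℓ])]
    have hpt : ∀ i : Fin L, δ (τ i) * phat (τ i)
        = (fun j : ℕ => β⁻¹ * ((max (c j) a - (a + m)) * q j)) i.val := by
      intro i; dsimp only
      rw [hδ]; dsimp only
      rw [← hcval i, ← hqval i]; ring
    calc ∑ ℓ, δ ℓ * phat ℓ = ∑ i : Fin L, δ (τ i) * phat (τ i) :=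
          (Equiv.sum_comp τ (fun ℓ => δ ℓ * phat ℓ)).symm
      _ = ∑ i : Fin L, (fun j : ℕ => β⁻¹ * ((max (c j) a - (a + m)) * q j)) i.val :=
          Finset.sum_congr rfl (fun i _ => hpt i)
      _ = ∑ i ∈ Finset.range L, β⁻¹ * ((max (c i) a - (a + m)) * q i) := by
          exact Fin.sum_univ_eq_sum_range (fun j => β⁻¹ * ((max (c j) a - (a + m)) * q j)) L
  have hsum2 : ∑ ℓ, μd ℓ * max (g ℓ - η) 0 = ∑ i ∈ Finset.range L, ms i * c i := by
    calc ∑ ℓ, μd ℓ * max (g ℓ - η) 0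
        = ∑ i : Fin L, μd (τ i) * max (g (τ i) - η) 0 :=
          (Equiv.sum_comp τ (fun ℓ => μd ℓ * max (g ℓ - η) 0)).symm
      _ = ∑ i : Fin L, (fun j : ℕ => ms j * c j) i.val := by
          refine Finset.sum_congr rfl (fun i _ => ?_)
          dsimp only
          rw [← hcval i, hμd]; dsimp only
          rw [Equiv.symm_apply_apply]
      _ = ∑ i ∈ Finset.range L, ms i * c i := by
          exact Fin.sum_univ_eq_sum_range (fun j => ms j * c j) L
  have hsubk : ∀ G : ℕ → ℝ, ∑ i ∈ Finset.range L, (if i < k then G i else 0)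
      = ∑ i ∈ Finset.range k, G i := by
    intro G
    rw [← Finset.sum_subset (Finset.range_subset_range.2 hkL.le)
      (fun x _ hx => if_neg (by simpa using hx))]
    exact Finset.sum_congr rfl (fun i hi => if_pos (Finset.mem_range.1 hi))
  have hmax1 : ∀ i ∈ Finset.range L, q i * max (c i) a =
      q i * c i - (if i < k then q i * c i else 0) + (if i < k then q i * a else 0) := by
    intro i hi
    rcases lt_or_ge i k with h | h
    · rw [if_pos h, if_pos h, max_eq_right (hcmono i k h.le hkL)]; ring
    · rw [if_neg (not_lt.2 h), if_neg (not_lt.2 h),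
        max_eq_left (hcmono k i h (Finset.mem_range.1 hi))]; ring
  have hE1 : ∑ i ∈ Finset.range L, q i * max (c i) a
      = ∑ i ∈ Finset.range L, q i * c i - ∑ i ∈ Finset.range k, q i * c i + F k * a := by
    rw [Finset.sum_congr rfl hmax1, Finset.sum_add_distrib, Finset.sum_sub_distrib,
      hsubk (fun i => q i * c i), hsubk (fun i => q i * a)]
    rw [← Finset.sum_mul]
  have hrc : ∀ i ∈ Finset.range L, ms i * c i = q i * c i
      - ((if i < k then q i * c i else 0) + (if i = k then (t - F k) * a else 0))
      + (if i = L - 1 then t * c i else 0) := by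
    intro i _
    have hite : (if i = L - 1 then t else 0) * c i = (if i = L - 1 then t * c i else 0) := by
      split_ifs <;> ring
    have hrci : r i * c i = (if i < k then q i * c i else 0)
        + (if i = k then (t - F k) * a else 0) := by
      rw [hr]; dsimp only
      rcases lt_trichotomy i k with h | h | h
      · rw [if_pos h, if_pos h, if_neg (ne_of_lt h)]; ring
      · rw [if_neg (not_lt.2 h.ge), if_neg (not_lt.2 h.ge), h, ← ha]; simp
      · rw [if_neg (not_lt.2 h.le), if_neg (not_lt.2 h.le), if_neg (ne_of_gt h),
          if_neg (ne_of_gt h)]; ring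
    rw [hms]; dsimp only
    rw [← hrci, ← hite]; ring
  have hE2 : ∑ i ∈ Finset.range L, ms i * c i
      = ∑ i ∈ Finset.range L, q i * c i
        - (∑ i ∈ Finset.range k, q i * c i + (t - F k) * a) + t * M := by
    rw [Finset.sum_congr rfl hrc, Finset.sum_add_distrib, Finset.sum_sub_distrib,
      Finset.sum_add_distrib, hsubk (fun i => q i * c i)]
    rw [Finset.sum_ite_eq' (Finset.range L) k (fun _ => (t - F k) * a),
      if_pos (Finset.mem_range.2 hkL)]
    rw [Finset.sum_ite_eq' (Finset.range L) (L - 1) (fun i => t * c i),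
      if_pos (Finset.mem_range.2 hL1), ← hM]
  have hcase : t = θ ∨ a = M := by
    rcases le_or_gt θ (F (L - 1)) with h | h
    · left; rw [htdef, min_eq_left h]
    · right
      have hkeq2 : k = L - 1 := by
        rcases hkspec with h' | h'
        · exact h'
        · by_contra hne
          have hlt : k + 1 ≤ L - 1 := by omega
          have := hFmono hlt
          linarith
      rw [ha, hM, hkeq2]
  have hFL' : ∑ i ∈ Finset.range L, q i = 1 := by rw [hF] at hFL; exact hFL
  have hδsum : ∑ i ∈ Finset.range L, β⁻¹ * ((max (c i) a - (a + m)) * q i)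
      = β⁻¹ * (∑ i ∈ Finset.range L, q i * max (c i) a - (a + m)) := by
    have h1 : ∀ i ∈ Finset.range L, β⁻¹ * ((max (c i) a - (a + m)) * q i)
        = β⁻¹ * (q i * max (c i) a) - β⁻¹ * ((a + m) * q i) := fun i _ => by ring
    rw [Finset.sum_congr rfl h1, Finset.sum_sub_distrib, ← Finset.mul_sum, ← Finset.mul_sum,
      ← Finset.mul_sum, hFL']
    ring
  have hkey : 2 * m * θ + ∑ i ∈ Finset.range L, q i * max (c i) a
      = ∑ i ∈ Finset.range L, ms i * c i := by
    rw [hE1, hE2]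
    rcases hcase with h | h
    · rw [h]
      linear_combination θ * hm2
    · rw [h] at hm2 ⊢
      linear_combination θ * hm2
  rw [hsum1, hsum2, hδsum, ← hkey, hlam, hν']
  ring
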